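/- Let f : ℝⁿ → ℝᵐ be measurable, locally bounded, and differentiable at a point x ∈ ℝⁿ. Then the mollification with the symmetric kernel satisfies ε^{−n} ∫_{ℝⁿ} ∏_{i=1}^{n} ψ_δ((x̃_i − x_i)/ε) f(x̃) dx̃ − f(x) = o(ε) as ε ↓ 0, i.e. lim_{ε↓0} ε^{−1} | ε^{−n} ∫_{ℝⁿ} ∏_{i=1}^{n} ψ_δ((x̃_i − x_i)/ε) f(x̃) dx̃ − f(x) | = 0. -/

import Mathlib

open MeasureTheory Topology

/-- A locally bounded function is bounded on compact sets. -/
lemma aux_bdd_on_compact {E F : Type*} [PseudoMetricSpace E] [SeminormedAddCommGroup F]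
    (f : E → F)
    (hf : ∀ z : E, ∃ r > (0:ℝ), ∃ C : ℝ, ∀ y ∈ Metric.ball z r, ‖f y‖ ≤ C)
    {K : Set E} (hK : IsCompact K) : ∃ C : ℝ, ∀ y ∈ K, ‖f y‖ ≤ C := by
  choose r hr C hC using hf
  obtain ⟨t, _, ht⟩ := hK.elim_nhds_subcover (fun z => Metric.ball z (r z))
    (fun z _ => Metric.ball_mem_nhds z (hr z))
  refine ⟨∑ z ∈ t, |C z|, fun y hy => ?_⟩
  obtain ⟨z, hz, hyz⟩ := Set.mem_iUnion₂.1 (ht hy)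
  calc ‖f y‖ ≤ C z := hC z y hyz
    _ ≤ |C z| := le_abs_self _
    _ ≤ ∑ z ∈ t, |C z| := Finset.single_le_sum (f := fun z => |C z|) (fun _ _ => abs_nonneg _) hz

set_option maxHeartbeats 1000000 in
/-- **Mollification with a symmetric kernel reproduces values to order `o(ε)` at
differentiability points (used in Lemmas 3.14/3.15).**
Fix `δ ∈ (0,1/2)` and an even kernel `ψ_δ ∈ C¹_c((−1,1))` with `ψ_δ ≡ 1` on `[−1+δ,1−δ]`
and `∫ψ_δ = 1`. If `f : ℝⁿ → ℝᵐ` is measurable, locally bounded and differentiable at `x`,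
then `ε^{−n} ∫ (∏ᵢ ψ_δ((x̃ᵢ−xᵢ)/ε)) f(x̃) dx̃ − f(x) = o(ε)` as `ε ↓ 0`. -/
theorem stmt_9 (n m : ℕ) (δ : ℝ) (hδ : δ ∈ Set.Ioo (0 : ℝ) (1 / 2))
    (ψ : ℝ → ℝ) (hψ_smooth : ContDiff ℝ 1 ψ)
    (hψ_supp : ∀ s : ℝ, s ∉ Set.Ioo (-1 : ℝ) 1 → ψ s = 0)
    (hψ_one : ∀ s ∈ Set.Icc (-1 + δ) (1 - δ), ψ s = 1)
    (hψ_even : ∀ s : ℝ, ψ (-s) = ψ s)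
    (hψ_int : ∫ s : ℝ, ψ s = 1)
    (f : EuclideanSpace ℝ (Fin n) → EuclideanSpace ℝ (Fin m))
    (hf_meas : Measurable f)
    (hf_locbdd : ∀ z : EuclideanSpace ℝ (Fin n), ∃ r > (0 : ℝ), ∃ C : ℝ,
      ∀ y ∈ Metric.ball z r, ‖f y‖ ≤ C)
    (x : EuclideanSpace ℝ (Fin n))
    (hf_diff : DifferentiableAt ℝ f x) :
    Filter.Tendsto
      (fun ε : ℝ => ε⁻¹ *
        ‖(ε ^ n)⁻¹ •
            (∫ y : EuclideanSpace ℝ (Fin n), (∏ i : Fin n, ψ ((y i - x i) / ε)) • f y)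
          - f x‖)
      (𝓝[>] 0) (𝓝 0) := by
  let E := EuclideanSpace ℝ (Fin n)
  have hψ_cont : Continuous ψ := hψ_smooth.continuous
  set K : E → ℝ := fun z => ∏ i, ψ (z i) with hKdef
  have hK_cont : Continuous K := by
    apply continuous_finset_prod
    intro i _
    exact hψ_cont.comp (EuclideanSpace.proj i : E →L[ℝ] ℝ).continuous
  set R : ℝ := Real.sqrt n with hRdef
  have hR0 : 0 ≤ R := Real.sqrt_nonneg _
  -- the kernel vanishes outside the ball of radius R
  have hK_supp : ∀ z : E, K z ≠ 0 → ‖z‖ ≤ R := by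
    intro z hz
    have h1 : ∀ i, |z i| ≤ 1 := by
      intro i
      have hne : ψ (z i) ≠ 0 := Finset.prod_ne_zero_iff.1 hz i (Finset.mem_univ i)
      by_contra h
      exact hne (hψ_supp _ (fun hmem => h (abs_le.2 ⟨hmem.1.le, hmem.2.le⟩)))
    rw [EuclideanSpace.norm_eq, hRdef]
    apply Real.sqrt_le_sqrt
    calc (∑ i, ‖z i‖ ^ 2) ≤ ∑ _i : Fin n, (1:ℝ) := by
          apply Finset.sum_le_sum
          intro i _
          have h2 := h1 i
          have : ‖z i‖ = |z i| := rfl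
          nlinarith [abs_nonneg (z i)]
      _ = n := by simp
  have hK_zero : ∀ z : E, z ∉ Metric.closedBall (0:E) R → K z = 0 := by
    intro z hz
    by_contra h
    exact hz (Metric.mem_closedBall.2 (by simpa using hK_supp z h))
  have hK_cs : HasCompactSupport K :=
    HasCompactSupport.intro (isCompact_closedBall (0:E) R) hK_zero
  have hK_int : Integrable K := hK_cont.integrable_of_hasCompactSupport hK_cs
  -- total mass one
  have hK_mass : ∫ z : E, K z = 1 := by
    have h := ((EuclideanSpace.volume_preserving_symm_measurableEquiv_toLp (Fin n)).symm
        (MeasurableEquiv.toLp 2 (Fin n → ℝ)).symm).integral_comp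
      (MeasurableEquiv.measurableEmbedding _) K
    rw [← h]
    have hw : ∀ w : Fin n → ℝ, K ((MeasurableEquiv.toLp 2 (Fin n → ℝ)).symm.symm w)
        = ∏ i, ψ (w i) := by
      intro w; simp [hKdef, MeasurableEquiv.coe_toLp]
    simp_rw [hw]
    rw [MeasureTheory.integral_fintype_prod_volume_eq_prod (f := fun (_ : Fin n) (v : ℝ) => ψ v)]
    simp [hψ_int]
  -- K is even
  have hK_even : ∀ z : E, K (-z) = K z := by
    intro z
    simp only [hKdef]
    apply Finset.prod_congr rfl
    intro i _
    have h : (-z) i = -(z i) := rfl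
    rw [h, hψ_even]
  set A := fderiv ℝ f x with hAdef
  -- integrability of the main integrand
  have hInt1 : ∀ ε : ℝ, ε ≠ 0 → Integrable (fun z : E => K z • f (x + ε • z)) := by
    intro ε hε
    obtain ⟨z₀, hMK⟩ := hK_cont.norm.exists_forall_ge_of_hasCompactSupport hK_cs.norm
    set S : Set E := (fun z : E => x + ε • z) '' Metric.closedBall 0 R with hSdef
    have hScomp : IsCompact S := (isCompact_closedBall _ _).image
      (continuous_const.add (continuous_id.const_smul ε))
    obtain ⟨C, hC⟩ := aux_bdd_on_compact f hf_locbdd hScomp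
    have hmap : Measurable (fun z : E => x + ε • z) := by fun_prop
    have hmeas : AEStronglyMeasurable (fun z : E => K z • f (x + ε • z)) volume :=
      (hK_cont.aestronglyMeasurable).smul ((hf_meas.comp hmap).aestronglyMeasurable)
    refine Integrable.mono' (g := (Metric.closedBall (0:E) R).indicator
        (fun _ => ‖K z₀‖ * |C|))
      ((integrable_indicator_iff measurableSet_closedBall).2
        (integrableOn_const measure_closedBall_lt_top.ne))
      hmeas (Filter.Eventually.of_forall fun z => ?_)
    by_cases hz : z ∈ Metric.closedBall (0:E) R
    · rw [Set.indicator_of_mem hz, norm_smul]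
      have hfz : ‖f (x + ε • z)‖ ≤ C := hC _ ⟨z, hz, rfl⟩
      have : ‖f (x + ε • z)‖ ≤ |C| := hfz.trans (le_abs_self _)
      exact mul_le_mul (hMK z) this (norm_nonneg _) (norm_nonneg _)
    · rw [Set.indicator_of_notMem hz]
      simp [hK_zero z hz]
  -- the linear term integrates to zero by symmetry
  have hOdd : ∀ ε : ℝ, (∫ z : E, K z • A (ε • z)) = 0 := by
    intro ε
    have h1 : (∫ z : E, K z • A (ε • z)) = ∫ z : E, K (-z) • A (ε • -z) :=
      (integral_neg_eq_self _ _).symm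
    have h2 : ∀ z : E, K (-z) • A (ε • -z) = -(K z • A (ε • z)) := by
      intro z
      rw [hK_even]
      rw [smul_neg, map_neg, smul_neg]
    have h3 : (∫ z : E, K z • A (ε • z)) = - ∫ z : E, K z • A (ε • z) := by
      calc (∫ z : E, K z • A (ε • z)) = ∫ z : E, K (-z) • A (ε • -z) := h1
        _ = ∫ z : E, -(K z • A (ε • z)) := by simp_rw [h2]
        _ = - ∫ z : E, K z • A (ε • z) := integral_neg _
    have h4 : (∫ z : E, K z • A (ε • z)) + (∫ z : E, K z • A (ε • z)) = 0 := by
      nth_rewrite 1 [h3]; exact neg_add_cancel _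
    rw [← two_smul ℝ] at h4
    exact (smul_eq_zero.mp h4).resolve_left two_ne_zero
  -- integrability of the linear term
  have hInt2 : ∀ ε : ℝ, Integrable (fun z : E => K z • A (ε • z)) := by
    intro ε
    have hc : Continuous (fun z : E => K z • A (ε • z)) :=
      hK_cont.smul (A.continuous.comp (continuous_id.const_smul ε))
    have hcs : HasCompactSupport (fun z : E => K z • A (ε • z)) :=
      HasCompactSupport.intro (isCompact_closedBall (0:E) R)
        (fun z hz => by simp [hK_zero z hz])
    exact hc.integrable_of_hasCompactSupport hcs
  have hconst : (∫ z : E, K z • f x) = f x := by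
    rw [integral_smul_const, hK_mass, one_smul]
  -- change of variables
  have hCOV : ∀ ε : ℝ, 0 < ε →
      (∫ y : E, (∏ i, ψ ((y i - x i) / ε)) • f y)
        = ε ^ n • ∫ z : E, K z • f (x + ε • z) := by
    intro ε hε
    have h1 : ∀ y : E, (∏ i, ψ ((y i - x i) / ε)) • f y
        = (fun v : E => K (ε⁻¹ • v) • f (x + v)) (y - x) := by
      intro y
      simp only
      congr 1
      · apply Finset.prod_congr rfl
        intro i _
        congr 1
        show (y i - x i) / ε = (ε⁻¹ • (y - x)) i
        rw [div_eq_inv_mul]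
        rfl
      · rw [add_sub_cancel]
    have hsm : ∀ v : E, ε • ε⁻¹ • v = v := by
      intro v; rw [smul_smul, mul_inv_cancel₀ hε.ne', one_smul]
    calc
      (∫ y : E, (∏ i, ψ ((y i - x i) / ε)) • f y)
          = ∫ y : E, (fun v : E => K (ε⁻¹ • v) • f (x + v)) (y - x) := by simp_rw [h1]
      _ = ∫ v : E, K (ε⁻¹ • v) • f (x + v) :=
          integral_sub_right_eq_self (fun v : E => K (ε⁻¹ • v) • f (x + v)) x
      _ = ∫ v : E, (fun z : E => K z • f (x + ε • z)) (ε⁻¹ • v) := by simp_rw [hsm]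
      _ = ε ^ n • ∫ z : E, K z • f (x + ε • z) := by
          rw [MeasureTheory.Measure.integral_comp_inv_smul_of_nonneg volume
            (fun z : E => K z • f (x + ε • z)) hε.le, finrank_euclideanSpace_fin]
  -- decomposition
  have hdecomp : ∀ ε : ℝ, 0 < ε →
      (∫ z : E, K z • f (x + ε • z)) - f x
        = ∫ z : E, K z • (f (x + ε • z) - f x - A (ε • z)) := by
    intro ε hε
    have e1 : (∫ z : E, K z • (f (x + ε • z) - f x - A (ε • z)))
        = (∫ z : E, K z • f (x + ε • z)) - (∫ z : E, K z • f x)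
            - (∫ z : E, K z • A (ε • z)) := by
      calc (∫ z : E, K z • (f (x + ε • z) - f x - A (ε • z)))
          = ∫ z : E, (K z • f (x + ε • z) - K z • f x - K z • A (ε • z)) := by
            simp_rw [smul_sub]
        _ = (∫ z : E, K z • f (x + ε • z)) - (∫ z : E, K z • f x)
              - (∫ z : E, K z • A (ε • z)) := by
            have i12 : Integrable (fun z : E => K z • f (x + ε • z) - K z • f x) volume :=
              (hInt1 ε hε.ne').sub (hK_int.smul_const (f x))
            rw [integral_sub i12 (hInt2 ε),
              integral_sub (hInt1 ε hε.ne') (hK_int.smul_const (f x))]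
    rw [e1, hconst, hOdd ε, sub_zero]
  -- differentiability estimate
  have hder := hasFDerivAt_iff_isLittleO_nhds_zero.1 hf_diff.hasFDerivAt
  -- final limit
  rw [Metric.tendsto_nhdsWithin_nhds]
  intro η hη
  set CK : ℝ := ∫ z : E, ‖K z‖ with hCKdef
  have hCK0 : 0 ≤ CK := integral_nonneg fun z => norm_nonneg _
  set η' : ℝ := η / (2 * (CK + 1) * (R + 1)) with hη'def
  have hη'0 : 0 < η' := by positivity
  obtain ⟨r, hr0, hr⟩ := Metric.eventually_nhds_iff.1 (hder.def hη'0)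
  refine ⟨min (r / (R + 1)) 1, by positivity, ?_⟩
  intro ε hεmem hεd
  have hε : 0 < ε := hεmem
  have hεr : ε * R < r := by
    have h1 : ε < r / (R + 1) := lt_of_lt_of_le (by
      rw [Real.dist_eq, sub_zero, abs_of_pos hε] at hεd; exact hεd) (min_le_left _ _)
    have h2 : ε * (R + 1) < r := (lt_div_iff₀ (by positivity)).1 h1
    nlinarith
  have hval : (ε ^ n)⁻¹ • (∫ y : E, (∏ i, ψ ((y i - x i) / ε)) • f y) - f x
      = ∫ z : E, K z • (f (x + ε • z) - f x - A (ε • z)) := by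
    rw [hCOV ε hε, smul_smul, inv_mul_cancel₀ (pow_ne_zero n hε.ne'), one_smul,
      hdecomp ε hε]
  have hb : ∀ z : E, ‖K z • (f (x + ε • z) - f x - A (ε • z))‖ ≤ ‖K z‖ * (η' * (ε * R)) := by
    intro z
    by_cases hz : K z = 0
    · simp [hz]
    · rw [norm_smul]
      apply mul_le_mul_of_nonneg_left _ (norm_nonneg _)
      have hz' : ‖z‖ ≤ R := hK_supp z hz
      have hd : dist (ε • z) 0 < r := by
        rw [dist_zero_right, norm_smul, Real.norm_eq_abs, abs_of_pos hε]
        calc ε * ‖z‖ ≤ ε * R := mul_le_mul_of_nonneg_left hz' hε.le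
          _ < r := hεr
      calc ‖f (x + ε • z) - f x - A (ε • z)‖ ≤ η' * ‖ε • z‖ := hr hd
        _ ≤ η' * (ε * R) := by
            rw [norm_smul, Real.norm_eq_abs, abs_of_pos hε]
            exact mul_le_mul_of_nonneg_left (mul_le_mul_of_nonneg_left hz' hε.le) hη'0.le
  have hnorm : ‖∫ z : E, K z • (f (x + ε • z) - f x - A (ε • z))‖ ≤ CK * (η' * (ε * R)) := by
    calc ‖∫ z : E, K z • (f (x + ε • z) - f x - A (ε • z))‖
        ≤ ∫ z : E, ‖K z‖ * (η' * (ε * R)) :=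
          norm_integral_le_of_norm_le (hK_int.norm.mul_const _)
            (Filter.Eventually.of_forall hb)
      _ = CK * (η' * (ε * R)) := by rw [integral_mul_const]
  rw [Real.dist_eq, sub_zero, hval,
    abs_of_nonneg (mul_nonneg (inv_nonneg.2 hε.le) (norm_nonneg _))]
  calc ε⁻¹ * ‖∫ z : E, K z • (f (x + ε • z) - f x - A (ε • z))‖
      ≤ ε⁻¹ * (CK * (η' * (ε * R))) :=
        mul_le_mul_of_nonneg_left hnorm (inv_nonneg.2 hε.le)
    _ = CK * η' * R := by field_simp
    _ < η := by
        have h5 : CK * η' * R ≤ (CK + 1) * (R + 1) * η' := by nlinarith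
        have h6 : (CK + 1) * (R + 1) * η' = η / 2 := by
          rw [hη'def]; field_simp
        linarith
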